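/- Let ξ ∈ C have order exactly 3. Then the stabilizer of (ξ, ξ) in W equals {1, a, bab, abab, baba, ababa}; it has order 6 and is nonabelian, hence isomorphic to the symmetric group S₃. -/
import Mathlib

/-- The permutation `a` of `C × C`, `a(ξ₁, ξ₂) = (ξ₂, ξ₁)` (the reflection `s_α`). -/
def aG2 (C : Type*) [CommGroup C] : Equiv.Perm (C × C) where
  toFun p := (p.2, p.1)
  invFun p := (p.2, p.1)
  left_inv p := rfl
  right_inv p := rfl

/-- The permutation `b` of `C × C`, `b(ξ₁, ξ₂) = (ξ₁ξ₂, ξ₂⁻¹)` (the reflection `s_β`). -/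
def bG2 (C : Type*) [CommGroup C] : Equiv.Perm (C × C) where
  toFun p := (p.1 * p.2, p.2⁻¹)
  invFun p := (p.1 * p.2, p.2⁻¹)
  left_inv p := by simp
  right_inv p := by simp

/-- The subgroup of `Perm (C × C)` generated by `a` and `b` (the Weyl group of `G₂`
acting on characters of the torus). -/
def WG2 (C : Type*) [CommGroup C] : Subgroup (Equiv.Perm (C × C)) :=
  Subgroup.closure {aG2 C, bG2 C}

section Aux

variable {C : Type*} [CommGroup C]

/-- the triple (x, y, (xy)⁻¹) -/
def TG2 (p : C × C) : Fin 3 → C := ![p.1, p.2, (p.1 * p.2)⁻¹]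

def PhiFun (σ : Equiv.Perm (Fin 3)) (p : C × C) : C × C :=
  (TG2 p (σ⁻¹ 0), TG2 p (σ⁻¹ 1))

lemma TG2_prod (p : C × C) (τ : Equiv.Perm (Fin 3)) :
    TG2 p (τ 0) * TG2 p (τ 1) * TG2 p (τ 2) = 1 := by
  have h := Equiv.prod_comp τ (TG2 p)
  rw [Fin.prod_univ_three, Fin.prod_univ_three] at h
  rw [h]; simp [TG2, mul_assoc]

lemma TG2_PhiFun (σ : Equiv.Perm (Fin 3)) (p : C × C) (i : Fin 3) :
    TG2 (PhiFun σ p) i = TG2 p (σ⁻¹ i) := by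
  match i with
  | 0 => rfl
  | 1 => rfl
  | 2 =>
    show (TG2 p (σ⁻¹ 0) * TG2 p (σ⁻¹ 1))⁻¹ = TG2 p (σ⁻¹ 2)
    exact inv_eq_of_mul_eq_one_right (TG2_prod p σ⁻¹)

/-- The homomorphism from `S₃` to `Perm (C × C)` permuting the triple `(x, y, (xy)⁻¹)`. -/
def PhiG2 : Equiv.Perm (Fin 3) →* Equiv.Perm (C × C) where
  toFun σ :=
    { toFun := PhiFun σ
      invFun := PhiFun σ⁻¹
      left_inv := fun p => by
        show (TG2 (PhiFun σ p) ((σ⁻¹)⁻¹ 0), TG2 (PhiFun σ p) ((σ⁻¹)⁻¹ 1)) = p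
        rw [TG2_PhiFun, TG2_PhiFun]; simp [TG2]
      right_inv := fun p => by
        show (TG2 (PhiFun σ⁻¹ p) (σ⁻¹ 0), TG2 (PhiFun σ⁻¹ p) (σ⁻¹ 1)) = p
        rw [TG2_PhiFun, TG2_PhiFun]; simp [TG2] }
  map_one' := by ext p <;> simp [PhiFun, TG2]
  map_mul' σ τ := Equiv.ext fun p => by
    show PhiFun (σ * τ) p = PhiFun σ (PhiFun τ p)
    have h0 := TG2_PhiFun τ p (σ⁻¹ 0)
    have h1 := TG2_PhiFun τ p (σ⁻¹ 1)
    show (TG2 p ((σ * τ)⁻¹ 0), TG2 p ((σ * τ)⁻¹ 1)) = _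
    rw [show PhiFun σ (PhiFun τ p) = (TG2 (PhiFun τ p) (σ⁻¹ 0), TG2 (PhiFun τ p) (σ⁻¹ 1)) from rfl,
      h0, h1]
    simp [mul_inv_rev]

lemma PhiG2_swap01 : (PhiG2 (Equiv.swap 0 1) : Equiv.Perm (C × C)) = aG2 C := by
  ext p <;> simp [PhiG2, PhiFun, TG2, aG2, Equiv.swap_apply_def]

lemma PhiG2_swap12 : (PhiG2 (Equiv.swap 1 2) : Equiv.Perm (C × C)) = bG2 C * aG2 C * bG2 C := by
  ext p <;> simp [PhiG2, PhiFun, TG2, aG2, bG2, Equiv.swap_apply_def, mul_comm]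

lemma PhiG2_swap02 : (PhiG2 (Equiv.swap 0 2) : Equiv.Perm (C × C)) =
    aG2 C * bG2 C * aG2 C * bG2 C * aG2 C := by
  ext p <;> simp [PhiG2, PhiFun, TG2, aG2, bG2, Equiv.swap_apply_def, mul_comm]

lemma aG2_sq : aG2 C * aG2 C = 1 := by ext p <;> simp [aG2]

lemma bG2_sq : bG2 C * bG2 C = 1 := by ext p <;> simp [bG2, mul_assoc, mul_comm, mul_left_comm]

lemma braidG2 : bG2 C * aG2 C * bG2 C * aG2 C * bG2 C * aG2 C
    = aG2 C * bG2 C * aG2 C * bG2 C * aG2 C * bG2 C := by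
  ext p <;> simp [aG2, bG2, mul_assoc, mul_comm, mul_left_comm]

lemma mul_aaG2 (w : Equiv.Perm (C × C)) : w * aG2 C * aG2 C = w := by
  rw [mul_assoc, aG2_sq, mul_one]

lemma mul_bbG2 (w : Equiv.Perm (C × C)) : w * bG2 C * bG2 C = w := by
  rw [mul_assoc, bG2_sq, mul_one]

end Aux

set_option maxHeartbeats 2000000 in
theorem stmt_7 {C : Type*} [CommGroup C] (ξ : C) (hξ : orderOf ξ = 3)
    (St : Subgroup (Equiv.Perm (C × C)))
    (hSt : St = WG2 C ⊓ MulAction.stabilizer (Equiv.Perm (C × C)) ((ξ, ξ) : C × C)) :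
    (St : Set (Equiv.Perm (C × C))) =
      {1, aG2 C, bG2 C * aG2 C * bG2 C, aG2 C * bG2 C * aG2 C * bG2 C,
        bG2 C * aG2 C * bG2 C * aG2 C, aG2 C * bG2 C * aG2 C * bG2 C * aG2 C} ∧
    Nat.card St = 6 ∧
    ¬(∀ x y : St, x * y = y * x) ∧
    Nonempty (St ≃* Equiv.Perm (Fin 3)) := by
  -- facts about ξ
  have h3 : ξ ^ 3 = 1 := hξ ▸ pow_orderOf_eq_one ξ
  have hm3 : ξ * ξ * ξ = 1 := by rw [← h3, pow_succ, pow_succ, pow_one]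
  have h1 : ξ * ξ = ξ⁻¹ := eq_inv_of_mul_eq_one_left hm3
  have h2 : ξ⁻¹ * ξ⁻¹ = ξ := by rw [← mul_inv, h1, inv_inv]
  have hne1 : ξ ≠ 1 := by
    intro h; rw [h, orderOf_one] at hξ; omega
  have hne2 : ξ * ξ ≠ 1 := by
    intro h
    have : orderOf ξ ∣ 2 := orderOf_dvd_of_pow_eq_one (by rw [pow_two]; exact h)
    rw [hξ] at this; omega
  have hnei : ξ ≠ ξ⁻¹ := by intro h; apply hne2; nth_rewrite 2 [h]; exact mul_inv_cancel ξ
  have hnei1 : ξ⁻¹ ≠ 1 := fun h => hne1 (by rwa [inv_eq_one] at h)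
  -- generators are in WG2
  have haW : aG2 C ∈ WG2 C := Subgroup.subset_closure (by left; rfl)
  have hbW : bG2 C ∈ WG2 C := Subgroup.subset_closure (by right; rfl)
  -- the six elements fix (ξ, ξ)
  have fix_a : (aG2 C) • ((ξ, ξ) : C × C) = (ξ, ξ) := rfl
  have fix_bab : (bG2 C * aG2 C * bG2 C) • ((ξ, ξ) : C × C) = (ξ, ξ) := by
    show (bG2 C * aG2 C * bG2 C) (ξ, ξ) = (ξ, ξ)
    simp [aG2, bG2, h1, h2]
  have fix_abab : (aG2 C * bG2 C * aG2 C * bG2 C) • ((ξ, ξ) : C × C) = (ξ, ξ) := by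
    show _ = _
    simp [Equiv.Perm.smul_def, aG2, bG2, h1, h2]
  have fix_baba : (bG2 C * aG2 C * bG2 C * aG2 C) • ((ξ, ξ) : C × C) = (ξ, ξ) := by
    simp [Equiv.Perm.smul_def, aG2, bG2, h1, h2]
  have fix_ababa : (aG2 C * bG2 C * aG2 C * bG2 C * aG2 C) • ((ξ, ξ) : C × C) = (ξ, ξ) := by
    simp [Equiv.Perm.smul_def, aG2, bG2, h1, h2]
  -- memberships in St
  have mem1 : (1 : Equiv.Perm (C × C)) ∈ St := St.one_mem
  have memA : aG2 C ∈ St := by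
    rw [hSt]; exact ⟨haW, fix_a⟩
  have memBAB : bG2 C * aG2 C * bG2 C ∈ St := by
    rw [hSt]; exact ⟨mul_mem (mul_mem hbW haW) hbW, fix_bab⟩
  have memABAB : aG2 C * bG2 C * aG2 C * bG2 C ∈ St := by
    rw [hSt]; exact ⟨mul_mem (mul_mem (mul_mem haW hbW) haW) hbW, fix_abab⟩
  have memBABA : bG2 C * aG2 C * bG2 C * aG2 C ∈ St := by
    rw [hSt]; exact ⟨mul_mem (mul_mem (mul_mem hbW haW) hbW) haW, fix_baba⟩
  have memABABA : aG2 C * bG2 C * aG2 C * bG2 C * aG2 C ∈ St := by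
    rw [hSt]; exact ⟨mul_mem (mul_mem (mul_mem (mul_mem haW hbW) haW) hbW) haW, fix_ababa⟩

  -- inverses of generators
  have aInv : (aG2 C)⁻¹ = aG2 C := rfl
  have bInv : (bG2 C)⁻¹ = bG2 C := rfl
  -- Part 1: the set equality
  have hset : (St : Set (Equiv.Perm (C × C))) =
      {1, aG2 C, bG2 C * aG2 C * bG2 C, aG2 C * bG2 C * aG2 C * bG2 C,
        bG2 C * aG2 C * bG2 C * aG2 C, aG2 C * bG2 C * aG2 C * bG2 C * aG2 C} := by
    apply Set.Subset.antisymm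
    · intro g hg
      rw [hSt] at hg
      obtain ⟨hgW, hgS⟩ := hg
      have hgW' : g ∈ Subgroup.closure {aG2 C, bG2 C} := hgW
      have hT : g ∈ ({1, aG2 C, bG2 C, aG2 C * bG2 C, bG2 C * aG2 C,
          aG2 C * bG2 C * aG2 C, bG2 C * aG2 C * bG2 C,
          aG2 C * bG2 C * aG2 C * bG2 C, bG2 C * aG2 C * bG2 C * aG2 C,
          aG2 C * bG2 C * aG2 C * bG2 C * aG2 C, bG2 C * aG2 C * bG2 C * aG2 C * bG2 C,
          aG2 C * bG2 C * aG2 C * bG2 C * aG2 C * bG2 C} : Set (Equiv.Perm (C × C)))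
          := by
        clear hgS hgW
        induction hgW' using Subgroup.closure_induction_left with
        | one => exact Or.inl rfl
        | mul_left x hx y hy ih =>
          rw [Set.mem_insert_iff, Set.mem_singleton_iff] at hx
          simp only [Set.mem_insert_iff, Set.mem_singleton_iff] at ih
          rcases hx with rfl | rfl <;>
            rcases ih with rfl|rfl|rfl|rfl|rfl|rfl|rfl|rfl|rfl|rfl|rfl|rfl <;>
            simp only [← mul_assoc, aG2_sq, bG2_sq, braidG2, one_mul, mul_one, mul_aaG2, mul_bbG2,
              Set.mem_insert_iff, Set.mem_singleton_iff, eq_self_iff_true, true_or, or_true]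
        | inv_mul_cancel x hx y hy ih =>
          rw [Set.mem_insert_iff, Set.mem_singleton_iff] at hx
          simp only [Set.mem_insert_iff, Set.mem_singleton_iff] at ih
          rcases hx with rfl | rfl <;> [rw [aInv]; rw [bInv]] <;>
            rcases ih with rfl|rfl|rfl|rfl|rfl|rfl|rfl|rfl|rfl|rfl|rfl|rfl <;>
            simp only [← mul_assoc, aG2_sq, bG2_sq, braidG2, one_mul, mul_one, mul_aaG2, mul_bbG2,
              Set.mem_insert_iff, Set.mem_singleton_iff, eq_self_iff_true, true_or, or_true]
      -- now eliminate the six non-stabilizing elements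
      have hfix : g • ((ξ, ξ) : C × C) = (ξ, ξ) := hgS
      rcases hT with rfl|rfl|rfl|rfl|rfl|rfl|rfl|rfl|rfl|rfl|rfl|rfl
      · exact Or.inl rfl
      · exact Or.inr (Or.inl rfl)
      · exfalso
        simp [Equiv.Perm.smul_def, aG2, bG2, Prod.ext_iff, h1, h2, hne1, hnei, hnei1,
          hnei.symm, hnei1.symm, hne1.symm] at hfix
      · exfalso
        simp [Equiv.Perm.smul_def, aG2, bG2, Prod.ext_iff, h1, h2, hne1, hnei, hnei1,
          hnei.symm, hnei1.symm, hne1.symm] at hfix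
      · exfalso
        simp [Equiv.Perm.smul_def, aG2, bG2, Prod.ext_iff, h1, h2, hne1, hnei, hnei1,
          hnei.symm, hnei1.symm, hne1.symm] at hfix
      · exfalso
        simp [Equiv.Perm.smul_def, aG2, bG2, Prod.ext_iff, h1, h2, hne1, hnei, hnei1,
          hnei.symm, hnei1.symm, hne1.symm] at hfix
      · exact Or.inr (Or.inr (Or.inl rfl))
      · exact Or.inr (Or.inr (Or.inr (Or.inl rfl)))
      · exact Or.inr (Or.inr (Or.inr (Or.inr (Or.inl rfl))))
      · exact Or.inr (Or.inr (Or.inr (Or.inr (Or.inr rfl))))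
      · exfalso
        simp [Equiv.Perm.smul_def, aG2, bG2, Prod.ext_iff, h1, h2, hne1, hnei, hnei1,
          hnei.symm, hnei1.symm, hne1.symm] at hfix
      · exfalso
        simp [Equiv.Perm.smul_def, aG2, bG2, Prod.ext_iff, h1, h2, hne1, hnei, hnei1,
          hnei.symm, hnei1.symm, hne1.symm] at hfix
    · intro g hg
      rcases hg with rfl|rfl|rfl|rfl|rfl|rfl
      exacts [mem1, memA, memBAB, memABAB, memBABA, memABABA]
  -- the isomorphism with S₃
  have hsw : ∀ x y : Fin 3, x ≠ y → Equiv.swap x y = Equiv.swap 0 1 ∨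
      Equiv.swap x y = Equiv.swap 1 2 ∨ Equiv.swap x y = Equiv.swap 0 2 := by decide
  have hswapmem : ∀ σ : Equiv.Perm (Fin 3), σ.IsSwap → PhiG2 σ ∈ St := by
    rintro σ ⟨x, y, hxy, rfl⟩
    rcases hsw x y hxy with h | h | h <;> rw [h]
    · rw [PhiG2_swap01]; exact memA
    · rw [PhiG2_swap12]; exact memBAB
    · rw [PhiG2_swap02]; exact memABABA
  have hPhiMem : ∀ σ : Equiv.Perm (Fin 3), PhiG2 σ ∈ St := by
    intro σ
    have hσ : σ ∈ Subgroup.closure {τ : Equiv.Perm (Fin 3) | τ.IsSwap} := by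
      rw [Equiv.Perm.closure_isSwap]; trivial
    induction hσ using Subgroup.closure_induction with
    | mem τ hτ => exact hswapmem τ hτ
    | one => rw [map_one]; exact St.one_mem
    | mul σ₁ σ₂ _ _ ih1 ih2 => rw [map_mul]; exact St.mul_mem ih1 ih2
    | inv σ₁ _ ih => rw [map_inv]; exact St.inv_mem ih
  have hall3 : ∀ j : Fin 3, j = 0 ∨ j = 1 ∨ j = 2 := by decide
  have hTinj : Function.Injective (TG2 ((ξ, 1) : C × C)) := by
    intro i j hij
    fin_cases i <;> fin_cases j <;>
      simp [TG2, hne1, hnei, hnei1, hnei.symm, hnei1.symm, hne1.symm] at hij ⊢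
  have hPhiInj : Function.Injective (PhiG2 (C := C)) := by
    rw [injective_iff_map_eq_one]
    intro σ hσ
    have hp : PhiFun σ ((ξ, 1) : C × C) = ((ξ, 1) : C × C) := by
      have h := congrArg (fun (e : Equiv.Perm (C × C)) => e ((ξ, 1) : C × C)) hσ
      exact h
    have e0 : σ⁻¹ 0 = 0 := hTinj (congrArg Prod.fst hp)
    have e1 : σ⁻¹ 1 = 1 := hTinj (congrArg Prod.snd hp)
    have e2 : σ⁻¹ 2 = 2 := by
      rcases hall3 (σ⁻¹ 2) with h | h | h
      · exact absurd (σ⁻¹.injective (h.trans e0.symm)) (by decide)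
      · exact absurd (σ⁻¹.injective (h.trans e1.symm)) (by decide)
      · exact h
    have hid : σ⁻¹ = 1 := by
      apply Equiv.ext; intro i
      rcases hall3 i with rfl | rfl | rfl <;> simpa [e0, e1, e2]
    exact inv_eq_one.mp hid
  have hPhiSurj : ∀ g ∈ St, ∃ σ : Equiv.Perm (Fin 3), PhiG2 σ = g := by
    intro g hg
    have hg' : g ∈ (St : Set (Equiv.Perm (C × C))) := hg
    rw [hset] at hg'
    rcases hg' with rfl|rfl|rfl|rfl|rfl|rfl
    · exact ⟨1, map_one _⟩
    · exact ⟨Equiv.swap 0 1, PhiG2_swap01⟩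
    · exact ⟨Equiv.swap 1 2, PhiG2_swap12⟩
    · exact ⟨Equiv.swap 0 1 * Equiv.swap 1 2, by
        rw [map_mul, PhiG2_swap01, PhiG2_swap12]; simp [mul_assoc]⟩
    · exact ⟨Equiv.swap 1 2 * Equiv.swap 0 1, by
        rw [map_mul, PhiG2_swap12, PhiG2_swap01]⟩
    · exact ⟨Equiv.swap 0 2, PhiG2_swap02⟩
  have iso : Equiv.Perm (Fin 3) ≃* St := by
    refine MulEquiv.ofBijective ((PhiG2 (C := C)).codRestrict St hPhiMem) ⟨?_, ?_⟩
    · intro σ τ h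
      exact hPhiInj (congrArg Subtype.val h)
    · rintro ⟨g, hg⟩
      obtain ⟨σ, hσ⟩ := hPhiSurj g hg
      exact ⟨σ, Subtype.ext hσ⟩
  refine ⟨hset, ?_, ?_, ⟨iso.symm⟩⟩
  · rw [← Nat.card_congr iso.toEquiv, Nat.card_eq_fintype_card, Fintype.card_perm,
      Fintype.card_fin]
    rfl
  · intro hcomm
    have h := hcomm ⟨aG2 C, memA⟩ ⟨bG2 C * aG2 C * bG2 C, memBAB⟩
    have h2 : aG2 C * (bG2 C * aG2 C * bG2 C) = bG2 C * aG2 C * bG2 C * aG2 C :=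
      congrArg Subtype.val h
    have h3 := congrArg (fun (e : Equiv.Perm (C × C)) => e ((ξ, 1) : C × C)) h2
    simp [Equiv.Perm.mul_apply, aG2, bG2, Prod.ext_iff, hne1, hnei, hnei1,
      hnei.symm, hnei1.symm, hne1.symm] at h3
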